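/- The polynomial f(x,y,z) = x + (y−z)² cannot be written in the form P(K(x)·L(y)·M(z)) for nonconstant polynomials P, K, L, M ∈ ℝ[t]. -/

import Mathlib

open MvPolynomial

/-- The polynomial `f(x,y,z) = x + (y - z)²` cannot be written as
`P(K(x)·L(y)·M(z))` with `P, K, L, M` nonconstant univariate real polynomials. -/
theorem stmt_9 :
    ¬ ∃ P K L M : Polynomial ℝ,
      0 < P.natDegree ∧ 0 < K.natDegree ∧ 0 < L.natDegree ∧ 0 < M.natDegree ∧
      (X 0 + (X 1 - X 2) ^ 2 : MvPolynomial (Fin 3) ℝ) =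
        Polynomial.aeval
          ((Polynomial.aeval (X 0 : MvPolynomial (Fin 3) ℝ) K) *
           (Polynomial.aeval (X 1 : MvPolynomial (Fin 3) ℝ) L) *
           (Polynomial.aeval (X 2 : MvPolynomial (Fin 3) ℝ) M)) P := by
  rintro ⟨P, K, L, M, hP, hK, hL, hM, h⟩
  have hK0 : K ≠ 0 := fun h0 => by simp [h0] at hK
  have hL0 : L ≠ 0 := fun h0 => by simp [h0] at hL
  have hM0 : M ≠ 0 := fun h0 => by simp [h0] at hM
  -- evaluation of the identity at (x, t, t)
  have key : ∀ x t : ℝ,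
      x = Polynomial.eval (K.eval x * L.eval t * M.eval t) P := by
    intro x t
    have := congrArg (MvPolynomial.aeval (R := ℝ) ![x, t, t]) h
    rw [← Polynomial.aeval_algHom_apply] at this
    have e : ∀ (i : Fin 3) (p : Polynomial ℝ), MvPolynomial.eval ![x, t, t]
        (Polynomial.aeval (X i : MvPolynomial (Fin 3) ℝ) p) = p.eval (![x, t, t] i) := by
      intro i p
      show MvPolynomial.aeval ![x, t, t] (Polynomial.aeval (X i : MvPolynomial (Fin 3) ℝ) p) = _
      rw [← Polynomial.aeval_algHom_apply (MvPolynomial.aeval (R := ℝ) ![x, t, t])]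
      simp
    simpa [← Polynomial.aeval_algHom_apply, Polynomial.coe_aeval_eq_eval, e,
      Matrix.cons_val_zero, Matrix.cons_val_one, Matrix.head_cons] using this
  -- pick x₀ with K.eval x₀ ≠ 0
  obtain ⟨x₀, hx₀⟩ : ∃ x₀, K.eval x₀ ≠ 0 := by
    by_contra hc
    push_neg at hc
    exact hK0 (Polynomial.zero_of_eval_zero K hc)
  set c : ℝ := K.eval x₀ with hc
  set Q : Polynomial ℝ := P.comp (Polynomial.C c * (L * M)) with hQ
  have hQeval : ∀ t : ℝ, Q.eval t = x₀ := by
    intro t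
    have := key x₀ t
    simp only [hQ, Polynomial.eval_comp, Polynomial.eval_mul, Polynomial.eval_C,
      ← mul_assoc]
    exact this.symm
  have hQconst : Q = Polynomial.C x₀ := by
    have : Q - Polynomial.C x₀ = 0 := by
      apply Polynomial.zero_of_eval_zero
      intro t
      simp [hQeval t]
    exact sub_eq_zero.mp this
  have hdeg : Q.natDegree = 0 := by rw [hQconst]; simp
  have hLM : (Polynomial.C c * (L * M)).natDegree = L.natDegree + M.natDegree := by
    rw [Polynomial.natDegree_C_mul hx₀, Polynomial.natDegree_mul hL0 hM0]
  have hdeg' : Q.natDegree = P.natDegree * (L.natDegree + M.natDegree) := by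
    rw [hQ, Polynomial.natDegree_comp, hLM]
  rw [hdeg] at hdeg'
  rcases Nat.mul_eq_zero.mp hdeg'.symm with h0 | h0 <;> omega
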